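/- Let 0 < α < π and let φ be the cardinal trigonometric GB-splines with phase α. Define, for p ≥ 1, h_p^{T_α}(θ) := φ p ((p+1)/2) + 2·Σ_{k=1}^{⌊p/2⌋} φ p ((p+1)/2 − k)·cos(kθ), and, for p ≥ 2, f_p^{T_α}(θ) := −φ̈ p ((p+1)/2) − 2·Σ_{k=1}^{⌊p/2⌋} φ̈ p ((p+1)/2 − k)·cos(kθ), where φ̈ p is the second derivative of t ↦ φ p t. Then for every integer p ≥ 3 and every θ ∈ [−π, π]: f_p^{T_α}(θ) = (2 − 2·cos θ) · h_{p−2}^{T_α}(θ). -/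

import Mathlib

open Real MeasureTheory

noncomputable def hSym (φ : ℕ → ℝ → ℝ) (p : ℕ) (θ : ℝ) : ℝ :=
  φ p (((p : ℝ) + 1) / 2) +
    2 * ∑ k ∈ Finset.Icc 1 (p / 2), φ p (((p : ℝ) + 1) / 2 - (k : ℝ)) * Real.cos ((k : ℝ) * θ)

noncomputable def fSym (φ : ℕ → ℝ → ℝ) (p : ℕ) (θ : ℝ) : ℝ :=
  -(deriv (deriv (φ p)) (((p : ℝ) + 1) / 2)) -
    2 * ∑ k ∈ Finset.Icc 1 (p / 2),
      deriv (deriv (φ p)) (((p : ℝ) + 1) / 2 - (k : ℝ)) * Real.cos ((k : ℝ) * θ)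

section
variable (α : ℝ) (φ : ℕ → ℝ → ℝ)
variable (hφ1 : ∀ t : ℝ, φ 1 t =
      if 0 ≤ t ∧ t < 1 then α / (2 * (1 - Real.cos α)) * Real.sin (α * t)
      else if 1 ≤ t ∧ t < 2 then α / (2 * (1 - Real.cos α)) * Real.sin (α * (2 - t))
      else 0)
variable (hrec : ∀ q : ℕ, 2 ≤ q → ∀ t : ℝ,
      φ q t = ∫ s in (0:ℝ)..t, (φ (q - 1) s - φ (q - 1) (s - 1)))

include hφ1 in
lemma phi1_closed (t : ℝ) :
    φ 1 t = α / (2 * (1 - Real.cos α)) *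
      Real.sin (α * min (max t 0) (max (2 - t) 0)) := by
  rw [hφ1 t]
  split_ifs with h1 h2
  · rw [max_eq_left h1.1, max_eq_left (by linarith [h1.2]), min_eq_left (by linarith [h1.2])]
  · rw [max_eq_left (by linarith [h2.1]), max_eq_left (by linarith [h2.2]),
      min_eq_right (by linarith [h2.1])]
  · rcases le_or_gt 0 t with h | h
    · have ht2 : 2 ≤ t := by
        by_contra hc
        push_neg at hc
        rcases lt_or_ge t 1 with h' | h'
        · exact h1 ⟨h, h'⟩
        · exact h2 ⟨h', hc⟩
      rw [max_eq_right (by linarith : 2 - t ≤ 0), min_eq_right (le_max_right _ _)]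
      simp
    · rw [max_eq_right h.le, min_eq_left (le_max_right _ _)]
      simp

include hφ1 hrec in
lemma phi_cont : ∀ q : ℕ, 1 ≤ q → Continuous (φ q) := by
  intro q hq
  induction q, hq using Nat.le_induction with
  | base =>
    have : φ 1 = fun t => α / (2 * (1 - Real.cos α)) *
        Real.sin (α * min (max t 0) (max (2 - t) 0)) := funext (phi1_closed α φ hφ1)
    rw [this]
    fun_prop
  | succ n hn ih =>
    have hg : Continuous fun s => φ n s - φ n (s - 1) :=
      ih.sub (ih.comp (continuous_id.sub continuous_const))
    have heq : φ (n + 1) = fun t => ∫ s in (0:ℝ)..t, (φ n s - φ n (s - 1)) := by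
      funext t
      simpa using hrec (n + 1) (by omega) t
    rw [heq]
    exact continuous_iff_continuousAt.2 fun t =>
      ((hg.integral_hasStrictDerivAt 0 t).hasDerivAt).continuousAt

include hφ1 hrec in
lemma phi_hasDerivAt : ∀ q : ℕ, 2 ≤ q → ∀ t : ℝ,
    HasDerivAt (φ q) (φ (q - 1) t - φ (q - 1) (t - 1)) t := by
  intro q hq t
  have hc : Continuous (φ (q - 1)) := phi_cont α φ hφ1 hrec (q - 1) (by omega)
  have hg : Continuous fun s => φ (q - 1) s - φ (q - 1) (s - 1) :=
    hc.sub (hc.comp (continuous_id.sub continuous_const))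
  have heq : φ q = fun t => ∫ s in (0:ℝ)..t, (φ (q - 1) s - φ (q - 1) (s - 1)) :=
    funext (hrec q hq)
  rw [heq]
  exact (hg.integral_hasStrictDerivAt 0 t).hasDerivAt

include hφ1 hrec in
lemma phi_nonpos : ∀ q : ℕ, 1 ≤ q → ∀ t : ℝ, t ≤ 0 → φ q t = 0 := by
  intro q hq
  induction q, hq using Nat.le_induction with
  | base =>
    intro t ht
    rw [phi1_closed α φ hφ1, max_eq_right ht, min_eq_left (le_max_right _ _)]
    simp
  | succ n hn ih =>
    intro t ht
    rw [show φ (n + 1) t = ∫ s in (0:ℝ)..t, (φ n s - φ n (s - 1)) from by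
      simpa using hrec (n + 1) (by omega) t]
    rw [intervalIntegral.integral_congr (g := fun _ => (0:ℝ))]
    · simp
    · intro s hs
      have hs0 : s ≤ 0 := by
        rcases Set.mem_uIcc.1 hs with h | h
        · linarith [h.2]
        · exact h.2
      simp only
      rw [ih s hs0, ih (s - 1) (by linarith)]
      ring

include hφ1 hrec in
lemma phi_symm : ∀ q : ℕ, 1 ≤ q → ∀ t : ℝ, φ q ((q : ℝ) + 1 - t) = φ q t := by
  intro q hq
  induction q, hq using Nat.le_induction with
  | base =>
    intro t
    push_cast
    rw [phi1_closed α φ hφ1, phi1_closed α φ hφ1 t,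
      show (1:ℝ) + 1 - t = 2 - t from by ring,
      show (2:ℝ) - (2 - t) = t from by ring, min_comm]
  | succ n hn ih =>
    intro t
    set g : ℝ → ℝ := fun s => φ n s - φ n (s - 1) with hgdef
    have hc : Continuous (φ n) := phi_cont α φ hφ1 hrec n hn
    have hgc : Continuous g := hc.sub (hc.comp (continuous_id.sub continuous_const))
    have hrec' : ∀ u : ℝ, φ (n + 1) u = ∫ s in (0:ℝ)..u, g s := fun u => by
      simpa using hrec (n + 1) (by omega) u
    have key : ∀ u : ℝ, φ (n + 1) ((n : ℝ) + 2 - u) = φ (n + 1) u - φ (n + 1) ((n : ℝ) + 2) := by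
      intro u
      have h1 := intervalIntegral.integral_comp_sub_left (a := u) (b := (n : ℝ) + 2) g ((n : ℝ) + 2)
      rw [sub_self] at h1
      have h2 : Set.EqOn (fun x => g ((n : ℝ) + 2 - x)) (fun x => -g x) (Set.uIcc u ((n : ℝ) + 2)) := by
        intro x _
        simp only [hgdef]
        rw [show (n : ℝ) + 2 - x - 1 = (n : ℝ) + 1 - x from by ring,
            show (n : ℝ) + 2 - x = (n : ℝ) + 1 - (x - 1) from by ring,
            ih (x - 1), ih x]
        ring
      have h3 : (∫ x in u..((n : ℝ) + 2), g x)
          = (∫ x in (0:ℝ)..((n : ℝ) + 2), g x) - ∫ x in (0:ℝ)..u, g x :=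
        (intervalIntegral.integral_interval_sub_left (hgc.intervalIntegrable _ _)
          (hgc.intervalIntegrable _ _)).symm
      rw [hrec', hrec', hrec', ← h1, intervalIntegral.integral_congr h2,
        intervalIntegral.integral_neg, h3]
      ring
    have h0 : φ (n + 1) (0 : ℝ) = 0 := by rw [hrec']; simp
    have hA : φ (n + 1) ((n : ℝ) + 2) = 0 := by
      have hk := key 0
      rw [sub_zero, h0] at hk
      linarith
    have hk := key t
    rw [hA, sub_zero] at hk
    rw [show ((n : ℕ) + 1 : ℕ) = n + 1 from rfl]
    push_cast
    rw [show (n : ℝ) + 1 + 1 - t = (n : ℝ) + 2 - t from by ring]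
    exact hk

end


lemma key_sum (θ : ℝ) (b : ℕ → ℝ) : ∀ n : ℕ, 1 ≤ n →
    -(2 * b 1 - 2 * b 0) -
      2 * ∑ k ∈ Finset.Icc 1 n, (b (k - 1) - 2 * b k + b (k + 1)) * Real.cos ((k : ℝ) * θ)
    = (2 - 2 * Real.cos θ) *
        (b 0 + 2 * ∑ k ∈ Finset.Icc 1 (n - 1), b k * Real.cos ((k : ℝ) * θ))
      + (4 * Real.cos ((n : ℝ) * θ) - 2 * Real.cos (((n : ℝ) - 1) * θ)) * b n
      - 2 * Real.cos ((n : ℝ) * θ) * b (n + 1) := by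
  intro n hn
  induction n, hn using Nat.le_induction with
  | base =>
    norm_num [Finset.Icc_self]
    ring
  | succ n hn ih =>
    obtain ⟨m, rfl⟩ : ∃ m, n = m + 1 := ⟨n - 1, by omega⟩
    rw [show m + 1 + 1 - 1 = m + 1 from rfl] at *
    rw [show m + 1 - 1 = m from rfl] at ih
    rw [Finset.sum_Icc_succ_top (by omega : (1:ℕ) ≤ m + 2)
          (fun k => (b (k - 1) - 2 * b k + b (k + 1)) * Real.cos ((k : ℝ) * θ)),
        Finset.sum_Icc_succ_top (by omega : (1:ℕ) ≤ m + 1)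
          (fun k => b k * Real.cos ((k : ℝ) * θ)),
        show m + 2 - 1 = m + 1 from rfl]
    have trig : Real.cos (((m : ℝ) + 2) * θ) + Real.cos ((m : ℝ) * θ)
        = 2 * Real.cos (((m : ℝ) + 1) * θ) * Real.cos θ := by
      have e1 : ((m : ℝ) + 2) * θ = ((m : ℝ) + 1) * θ + θ := by ring
      have e2 : (m : ℝ) * θ = ((m : ℝ) + 1) * θ - θ := by ring
      rw [e1, e2, Real.cos_add, Real.cos_sub]; ring
    push_cast
    push_cast at ih
    have r1 : ((m:ℝ) + 1 + 1) * θ = ((m:ℝ) + 2) * θ := by ring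
    have r2 : ((m:ℝ) + 1 + 1 - 1) * θ = ((m:ℝ) + 1) * θ := by ring
    have r3 : ((m:ℝ) + 1 - 1) * θ = (m:ℝ) * θ := by ring
    simp only [r1, r2, r3] at ih ⊢
    linear_combination ih - 2 * b (m + 1) * trig

noncomputable def bAux (φ : ℕ → ℝ → ℝ) (p : ℕ) (k : ℕ) : ℝ :=
  φ (p - 2) (((p : ℝ) - 1) / 2 - (k : ℝ))

section
variable (α : ℝ) (φ : ℕ → ℝ → ℝ)
variable (hφ1 : ∀ t : ℝ, φ 1 t =
      if 0 ≤ t ∧ t < 1 then α / (2 * (1 - Real.cos α)) * Real.sin (α * t)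
      else if 1 ≤ t ∧ t < 2 then α / (2 * (1 - Real.cos α)) * Real.sin (α * (2 - t))
      else 0)
variable (hrec : ∀ q : ℕ, 2 ≤ q → ∀ t : ℝ,
      φ q t = ∫ s in (0:ℝ)..t, (φ (q - 1) s - φ (q - 1) (s - 1)))

include hφ1 hrec in
lemma phi_deriv2 (p : ℕ) (hp : 3 ≤ p) (t : ℝ) :
    deriv (deriv (φ p)) t = φ (p - 2) t - 2 * φ (p - 2) (t - 1) + φ (p - 2) (t - 2) := by
  have hdp : deriv (φ p) = fun u => φ (p - 1) u - φ (p - 1) (u - 1) :=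
    funext fun u => (phi_hasDerivAt α φ hφ1 hrec p (by omega) u).deriv
  rw [hdp]
  have hA := phi_hasDerivAt α φ hφ1 hrec (p - 1) (by omega) t
  have hB0 := phi_hasDerivAt α φ hφ1 hrec (p - 1) (by omega) (t - 1)
  have hB : HasDerivAt (fun u => φ (p - 1) (u - 1))
      (φ (p - 1 - 1) (t - 1) - φ (p - 1 - 1) (t - 1 - 1)) t := by
    simpa [Function.comp_def] using hB0.comp t ((hasDerivAt_id t).sub_const 1)
  have h := (hA.sub hB).deriv
  rw [show (fun u => φ (p - 1) u - φ (p - 1) (u - 1)) = (φ (p - 1) - fun u => φ (p - 1) (u - 1)) from rfl,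
    h, show p - 1 - 1 = p - 2 from by omega, show t - 1 - 1 = t - 2 from by ring]
  ring

end


theorem fSym_eq_hSym_trig (α : ℝ) (hα : 0 < α) (hαπ : α < Real.pi) (φ : ℕ → ℝ → ℝ)
    (hφ1 : ∀ t : ℝ, φ 1 t =
      if 0 ≤ t ∧ t < 1 then α / (2 * (1 - Real.cos α)) * Real.sin (α * t)
      else if 1 ≤ t ∧ t < 2 then α / (2 * (1 - Real.cos α)) * Real.sin (α * (2 - t))
      else 0)
    (hrec : ∀ q : ℕ, 2 ≤ q → ∀ t : ℝ,
      φ q t = ∫ s in (0:ℝ)..t, (φ (q - 1) s - φ (q - 1) (s - 1)))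
    (p : ℕ) (hp : 3 ≤ p)
    (θ : ℝ) (hθ : θ ∈ Set.Icc (-Real.pi) Real.pi) :
    fSym φ p θ = (2 - 2 * Real.cos θ) * hSym φ (p - 2) θ := by
  have hsym : ∀ x : ℝ, φ (p - 2) (((p : ℝ) - 1) - x) = φ (p - 2) x := by
    intro x
    have h := phi_symm α φ hφ1 hrec (p - 2) (by omega) x
    rwa [show ((p - 2 : ℕ) : ℝ) + 1 = (p : ℝ) - 1 from by
      rw [Nat.cast_sub (by omega)]; push_cast; ring] at h
  have d2 := phi_deriv2 α φ hφ1 hrec p hp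
  have hbtop : φ (p - 2) (((p : ℝ) + 1) / 2) = bAux φ p 1 := by
    rw [← hsym (((p : ℝ) + 1) / 2)]
    unfold bAux
    congr 1
    push_cast
    ring
  have hb0 : φ (p - 2) (((p : ℝ) + 1) / 2 - 1) = bAux φ p 0 := by
    unfold bAux; congr 1; push_cast; ring
  have hb1 : φ (p - 2) (((p : ℝ) + 1) / 2 - 2) = bAux φ p 1 := by
    unfold bAux; congr 1; push_cast; ring
  have hcenter : φ (p - 2) ((((p - 2 : ℕ) : ℝ) + 1) / 2) = bAux φ p 0 := by
    unfold bAux; congr 1; rw [Nat.cast_sub (by omega)]; push_cast; ring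
  have hSum1 : ∀ k ∈ Finset.Icc 1 (p / 2),
      (φ (p - 2) (((p : ℝ) + 1) / 2 - (k : ℝ)) - 2 * φ (p - 2) (((p : ℝ) + 1) / 2 - (k : ℝ) - 1)
        + φ (p - 2) (((p : ℝ) + 1) / 2 - (k : ℝ) - 2)) * Real.cos ((k : ℝ) * θ)
      = (bAux φ p (k - 1) - 2 * bAux φ p k + bAux φ p (k + 1)) * Real.cos ((k : ℝ) * θ) := by
    intro k hk
    have hk1 : 1 ≤ k := (Finset.mem_Icc.1 hk).1
    have a1 : φ (p - 2) (((p : ℝ) + 1) / 2 - (k : ℝ)) = bAux φ p (k - 1) := by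
      unfold bAux; congr 1; rw [Nat.cast_sub hk1]; push_cast; ring
    have a2 : φ (p - 2) (((p : ℝ) + 1) / 2 - (k : ℝ) - 1) = bAux φ p k := by
      unfold bAux; congr 1; push_cast; ring
    have a3 : φ (p - 2) (((p : ℝ) + 1) / 2 - (k : ℝ) - 2) = bAux φ p (k + 1) := by
      unfold bAux; congr 1; push_cast; ring
    rw [a1, a2, a3]
  have hSum2 : ∀ k ∈ Finset.Icc 1 ((p - 2) / 2),
      φ (p - 2) ((((p - 2 : ℕ) : ℝ) + 1) / 2 - (k : ℝ)) * Real.cos ((k : ℝ) * θ)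
      = bAux φ p k * Real.cos ((k : ℝ) * θ) := by
    intro k _
    have a : φ (p - 2) ((((p - 2 : ℕ) : ℝ) + 1) / 2 - (k : ℝ)) = bAux φ p k := by
      unfold bAux; congr 1; rw [Nat.cast_sub (by omega : 2 ≤ p)]; push_cast; ring
    rw [a]
  have hbm : bAux φ p (p / 2) = 0 := by
    unfold bAux
    apply phi_nonpos α φ hφ1 hrec (p - 2) (by omega)
    have hn : ((p - 1 : ℕ) : ℝ) ≤ 2 * ((p / 2 : ℕ) : ℝ) := by
      exact_mod_cast (by omega : (p - 1 : ℕ) ≤ 2 * (p / 2))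
    rw [Nat.cast_sub (by omega : 1 ≤ p)] at hn
    push_cast at hn
    linarith
  have hbm1 : bAux φ p (p / 2 + 1) = 0 := by
    unfold bAux
    apply phi_nonpos α φ hφ1 hrec (p - 2) (by omega)
    have hn : ((p - 1 : ℕ) : ℝ) ≤ 2 * ((p / 2 : ℕ) : ℝ) := by
      exact_mod_cast (by omega : (p - 1 : ℕ) ≤ 2 * (p / 2))
    rw [Nat.cast_sub (by omega : 1 ≤ p)] at hn
    push_cast at hn
    push_cast
    linarith
  have hkey := key_sum θ (bAux φ p) (p / 2) (by omega : 1 ≤ p / 2)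
  rw [hbm, hbm1] at hkey
  simp only [fSym, hSym, d2]
  rw [Finset.sum_congr rfl hSum1, Finset.sum_congr rfl hSum2,
    hbtop, hb0, hb1, hcenter, show (p - 2) / 2 = p / 2 - 1 from by omega]
  linear_combination hkey
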